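/- Let p̃ be a strictly positive C² function on an open interval I satisfying p̃·p̃'' - (1/2)(p̃')² + 2p̃² = 0 and (p̃')²/p̃ + 4p̃ = C for a constant C > 0. Then there exists b such that p̃(θ) = (C/4)·cos²(θ + b) on I. -/

import Mathlib

open Real

/-- A positive `C²` solution of the steady-state pressure equation whose conserved quantity
`(p̃')²/p̃ + 4p̃` equals `C > 0` has the form `p̃(θ) = (C/4) cos²(θ + b)`. -/
theorem steady_state_form (ptilde : ℝ → ℝ) (x y C : ℝ) (hC : 0 < C)
    (hsmooth : ContDiffOn ℝ 2 ptilde (Set.Ioo x y))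
    (hpos : ∀ θ ∈ Set.Ioo x y, 0 < ptilde θ)
    (heq : ∀ θ ∈ Set.Ioo x y,
      ptilde θ * deriv (deriv ptilde) θ - (1 / 2) * (deriv ptilde θ) ^ 2
        + 2 * (ptilde θ) ^ 2 = 0)
    (hcons : ∀ θ ∈ Set.Ioo x y,
      (deriv ptilde θ) ^ 2 / ptilde θ + 4 * ptilde θ = C) :
    ∃ b : ℝ, ∀ θ ∈ Set.Ioo x y, ptilde θ = (C / 4) * Real.cos (θ + b) ^ 2 := by
  set I := Set.Ioo x y with hI
  by_cases hne : I.Nonempty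
  swap
  · exact ⟨0, fun θ hθ => absurd ⟨θ, hθ⟩ hne⟩
  obtain ⟨θ₀, hθ₀⟩ := hne
  have hIopen : IsOpen I := isOpen_Ioo
  -- basic differentiability
  have hp1 : DifferentiableOn ℝ ptilde I := hsmooth.differentiableOn (by norm_num)
  have hp'C : ContDiffOn ℝ 1 (deriv ptilde) I :=
    hsmooth.deriv_of_isOpen hIopen (by norm_num : (1:WithTop ℕ∞) + 1 ≤ 2)
  have hp'1 : DifferentiableOn ℝ (deriv ptilde) I := hp'C.differentiableOn (by norm_num)
  set u : ℝ → ℝ := fun θ => Real.sqrt (ptilde θ) with hu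
  set q : ℝ → ℝ := fun θ => deriv ptilde θ / (2 * Real.sqrt (ptilde θ)) with hq
  have husq : ∀ θ ∈ I, u θ ^ 2 = ptilde θ := fun θ hθ =>
    Real.sq_sqrt (hpos θ hθ).le
  have hupos : ∀ θ ∈ I, 0 < u θ := fun θ hθ => Real.sqrt_pos.2 (hpos θ hθ)
  have hdp : ∀ θ ∈ I, HasDerivAt ptilde (deriv ptilde θ) θ := fun θ hθ =>
    ((hp1 θ hθ).differentiableAt (hIopen.mem_nhds hθ)).hasDerivAt
  have hdp' : ∀ θ ∈ I, HasDerivAt (deriv ptilde) (deriv (deriv ptilde) θ) θ := fun θ hθ =>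
    ((hp'1 θ hθ).differentiableAt (hIopen.mem_nhds hθ)).hasDerivAt
  -- derivative of u is q
  have hdu : ∀ θ ∈ I, HasDerivAt u (q θ) θ := by
    intro θ hθ
    have h := (Real.hasDerivAt_sqrt (ne_of_gt (hpos θ hθ))).comp θ (hdp θ hθ)
    simpa [hq, div_eq_inv_mul, mul_comm, mul_assoc, mul_left_comm, Function.comp_def] using h
  -- derivative of q is -u
  have hdq : ∀ θ ∈ I, HasDerivAt q (-(u θ)) θ := by
    intro θ hθ
    have hU : u θ ≠ 0 := ne_of_gt (hupos θ hθ)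
    have hden : (2 : ℝ) * Real.sqrt (ptilde θ) ≠ 0 := by
      simpa [hu] using mul_ne_zero two_ne_zero hU
    have h1 : HasDerivAt (fun t => 2 * Real.sqrt (ptilde t)) (2 * q θ) θ :=
      (hdu θ hθ).const_mul 2
    have h := (hdp' θ hθ).div h1 hden
    refine h.congr_deriv (Eq.symm ?_)
    have hpq : ptilde θ * deriv (deriv ptilde) θ - (1 / 2) * (deriv ptilde θ) ^ 2
        + 2 * (ptilde θ) ^ 2 = 0 := heq θ hθ
    have hsq : Real.sqrt (ptilde θ) ^ 2 = ptilde θ := husq θ hθ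
    have hsq4 : Real.sqrt (ptilde θ) ^ 4 = ptilde θ ^ 2 := by
      rw [show (4:ℕ) = 2*2 from rfl, pow_mul, hsq]
    have h3 : Real.sqrt (ptilde θ) ^ 2 * deriv (deriv ptilde) θ
        = ptilde θ * deriv (deriv ptilde) θ := by rw [hsq]
    have hP : ptilde θ ≠ 0 := ne_of_gt (hpos θ hθ)
    simp only [hq, hu]
    field_simp [(Real.sqrt_pos.2 (hpos θ hθ)).ne']
    nlinarith [hpq, hsq4, h3, hsq]
  -- F and G are constant
  set F : ℝ → ℝ := fun θ => u θ * Real.cos θ - q θ * Real.sin θ with hF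
  set G : ℝ → ℝ := fun θ => u θ * Real.sin θ + q θ * Real.cos θ with hG
  have hdF : ∀ θ ∈ I, HasDerivAt F 0 θ := by
    intro θ hθ
    have h := ((hdu θ hθ).mul (Real.hasDerivAt_cos θ)).sub
      ((hdq θ hθ).mul (Real.hasDerivAt_sin θ))
    refine h.congr_deriv ?_; ring
  have hdG : ∀ θ ∈ I, HasDerivAt G 0 θ := by
    intro θ hθ
    have h := ((hdu θ hθ).mul (Real.hasDerivAt_sin θ)).add
      ((hdq θ hθ).mul (Real.hasDerivAt_cos θ))
    refine h.congr_deriv ?_; ring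
  have hconst : ∀ (H : ℝ → ℝ), (∀ θ ∈ I, HasDerivAt H 0 θ) → ∀ θ ∈ I, H θ = H θ₀ := by
    intro H hH θ hθ
    refine (convex_Ioo x y).is_const_of_fderivWithin_eq_zero
      (fun t ht => ((hH t ht).differentiableAt.differentiableWithinAt)) ?_ hθ hθ₀
    intro t ht
    rw [fderivWithin_of_isOpen hIopen ht, (hH t ht).hasFDerivAt.fderiv]
    ext
    simp

  obtain ⟨a, ha⟩ : ∃ a, F θ₀ = a := ⟨F θ₀, rfl⟩
  obtain ⟨bb, hbb⟩ : ∃ bb, G θ₀ = bb := ⟨G θ₀, rfl⟩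
  -- u θ = a cos θ + bb sin θ
  have hurep : ∀ θ ∈ I, u θ = a * Real.cos θ + bb * Real.sin θ := by
    intro θ hθ
    have h1 : F θ = a := (hconst F hdF θ hθ).trans ha
    have h2 : G θ = bb := (hconst G hdG θ hθ).trans hbb
    have e1 : F θ = u θ * Real.cos θ - q θ * Real.sin θ := rfl
    have e2 : G θ = u θ * Real.sin θ + q θ * Real.cos θ := rfl
    have hpy := Real.sin_sq_add_cos_sq θ
    rw [e1] at h1; rw [e2] at h2
    linear_combination (Real.cos θ) * h1 + (Real.sin θ) * h2 - (u θ) * hpy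
  -- a² + bb² = C/4
  have hab : a ^ 2 + bb ^ 2 = C / 4 := by
    have hc := hcons θ₀ hθ₀
    have hP : ptilde θ₀ ≠ 0 := ne_of_gt (hpos θ₀ hθ₀)
    have hsq : u θ₀ ^ 2 = ptilde θ₀ := husq θ₀ hθ₀
    have hq2 : q θ₀ ^ 2 = (deriv ptilde θ₀) ^ 2 / (4 * ptilde θ₀) := by
      simp only [hq]
      rw [div_pow, mul_pow]
      rw [show Real.sqrt (ptilde θ₀) ^ 2 = ptilde θ₀ from hsq]
      ring
    have hpy := Real.sin_sq_add_cos_sq θ₀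
    have e1 : F θ₀ = u θ₀ * Real.cos θ₀ - q θ₀ * Real.sin θ₀ := rfl
    have e2 : G θ₀ = u θ₀ * Real.sin θ₀ + q θ₀ * Real.cos θ₀ := rfl
    rw [e1] at ha; rw [e2] at hbb
    have hab2 : a ^ 2 + bb ^ 2 = u θ₀ ^ 2 + q θ₀ ^ 2 := by
      linear_combination (-(a + u θ₀ * Real.cos θ₀ - q θ₀ * Real.sin θ₀)) * ha
        - (bb + u θ₀ * Real.sin θ₀ + q θ₀ * Real.cos θ₀) * hbb
        + (u θ₀ ^ 2 + q θ₀ ^ 2) * hpy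
    rw [hab2, hq2, hsq]
    field_simp at hc ⊢
    linarith [hc]
  -- choose b
  set R := Real.sqrt C / 2 with hR
  have hRpos : 0 < R := by positivity
  have hR2 : R ^ 2 = C / 4 := by
    rw [hR, div_pow, Real.sq_sqrt hC.le]; norm_num
  have hRne : R ≠ 0 := ne_of_gt hRpos
  have habR : a ^ 2 + bb ^ 2 = R ^ 2 := by rw [hab, hR2]
  clear_value R
  have hxy2 : (a / R) ^ 2 + (-bb / R) ^ 2 = 1 := by
    field_simp
    linarith [habR]
  obtain ⟨b, hcb, hsb⟩ : ∃ b : ℝ, Real.cos b = a / R ∧ Real.sin b = -bb / R := by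
    have hax : -1 ≤ a / R ∧ a / R ≤ 1 := by
      constructor <;>
        nlinarith [sq_nonneg (-bb / R), hxy2, sq_nonneg (a / R - 1), sq_nonneg (a / R + 1)]
    by_cases hs : 0 ≤ -bb / R
    · refine ⟨Real.arccos (a / R), Real.cos_arccos hax.1 hax.2, ?_⟩
      rw [Real.sin_arccos]
      rw [show 1 - (a/R)^2 = (-bb/R)^2 by linarith [hxy2]]
      exact Real.sqrt_sq hs
    · refine ⟨-Real.arccos (a / R), by rw [Real.cos_neg]; exact Real.cos_arccos hax.1 hax.2, ?_⟩
      rw [Real.sin_neg, Real.sin_arccos]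
      rw [show 1 - (a/R)^2 = (-bb/R)^2 by linarith [hxy2]]
      rw [show (-bb/R)^2 = (bb/R)^2 by ring, Real.sqrt_sq (by have h := not_le.1 hs; rw [neg_div] at h; linarith)]
      ring
  have h1 : R * Real.cos b = a := by rw [hcb]; field_simp
  have h2 : R * Real.sin b = -bb := by rw [hsb]; field_simp
  refine ⟨b, fun θ hθ => ?_⟩
  have hcos : R * Real.cos (θ + b) = u θ := by
    rw [Real.cos_add]
    linear_combination Real.cos θ * h1 - Real.sin θ * h2 - hurep θ hθ
  have hfin : ptilde θ = (R * Real.cos (θ + b)) ^ 2 := by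
    rw [hcos]; exact (husq θ hθ).symm
  rw [hfin, mul_pow, hR2]
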